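/- Let X_1,...,X_K be independent random variables with X_{K+1} := X_1, let f_i : ℝ² → ℝ be component-wise increasing functions, and set Y_i = f_i(X_i, −X_{i+1}). Then (Y_1,...,Y_K) is negatively upper orthant dependent: P(Y_1 > y_1, ..., Y_K > y_K) ≤ ∏_{i=1}^K P(Y_i > y_i) for all y_1,...,y_K ∈ ℝ. -/

import Mathlib

open MeasureTheory
open scoped ENNReal

namespace CyclicNUOD

lemma rearrange {a b c d : ℝ≥0∞} (hab : a ≤ b) (hcd : c ≤ d) : a*d + b*c ≤ a*c + b*d := by
  obtain ⟨u, rfl⟩ := exists_add_of_le hab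
  obtain ⟨v, rfl⟩ := exists_add_of_le hcd
  calc a*(c+v) + (a+u)*c ≤ a*(c+v) + (a+u)*c + u*v := le_self_add
    _ = a*c + (a+u)*(c+v) := by ring

lemma cheb {α : Type*} [MeasurableSpace α] (μ : Measure α) [IsProbabilityMeasure μ]
    {f g : α → ℝ≥0∞} (hf : Measurable f) (hg : Measurable g)
    (hfg : ∀ x y, f x * g x + f y * g y ≤ f x * g y + f y * g x) :
    ∫⁻ x, f x * g x ∂μ ≤ (∫⁻ x, f x ∂μ) * ∫⁻ x, g x ∂μ := by
  set I := ∫⁻ x, f x * g x ∂μ with hI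
  have key : ∀ x, f x * g x + I ≤ f x * (∫⁻ y, g y ∂μ) + (∫⁻ y, f y ∂μ) * g x := by
    intro x
    have h1 : ∫⁻ y, (f x * g x + f y * g y) ∂μ ≤ ∫⁻ y, (f x * g y + f y * g x) ∂μ :=
      lintegral_mono fun y => hfg x y
    rwa [lintegral_add_left measurable_const, lintegral_const,
      measure_univ, mul_one, lintegral_add_left (f := fun y => f x * g y) (measurable_const.mul hg),
      lintegral_const_mul _ hg, lintegral_mul_const _ hf] at h1
  have h2 : ∫⁻ x, (f x * g x + I) ∂μ ≤ ∫⁻ x, (f x * (∫⁻ y, g y ∂μ) + (∫⁻ y, f y ∂μ) * g x) ∂μ :=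
    lintegral_mono key
  rw [lintegral_add_right _ measurable_const, lintegral_const, measure_univ, mul_one,
    lintegral_add_left (f := fun x => f x * ∫⁻ y, g y ∂μ) (hf.mul measurable_const), lintegral_mul_const _ hf,
    lintegral_const_mul _ hg] at h2
  have h3 : 2 * I ≤ 2 * ((∫⁻ x, f x ∂μ) * ∫⁻ x, g x ∂μ) := by
    rw [two_mul, two_mul]; exact h2
  exact (ENNReal.mul_le_mul_iff_right two_ne_zero ENNReal.ofNat_ne_top).mp h3

lemma cheb_mono_anti {f g : ℝ → ℝ≥0∞} (μ : Measure ℝ) [IsProbabilityMeasure μ]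
    (hf : Measurable f) (hg : Measurable g) (hfm : Monotone f) (hga : Antitone g) :
    ∫⁻ x, f x * g x ∂μ ≤ (∫⁻ x, f x ∂μ) * ∫⁻ x, g x ∂μ := by
  refine cheb μ hf hg fun x y => ?_
  rcases le_total x y with h | h
  · exact rearrange (hfm h) (hga h)
  · rw [add_comm (f x * g x), add_comm (f x * g y)]
    exact rearrange (hfm h) (hga h)


noncomputable def D : ℕ → (ℕ → Measure ℝ) → (ℕ → ℝ → ℝ → ℝ≥0∞) → ℝ → ℝ → ℝ≥0∞
  | 0, _, g => g 0
  | (n+1), ν, g => fun s t =>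
      ∫⁻ x, g 0 s x * D n (fun k => ν (k+1)) (fun k => g (k+1)) x t ∂(ν 0)

structure Hyp (ν : ℕ → Measure ℝ) (g : ℕ → ℝ → ℝ → ℝ≥0∞) : Prop where
  prob : ∀ k, IsProbabilityMeasure (ν k)
  meas : ∀ k, Measurable fun p : ℝ × ℝ => g k p.1 p.2
  le1 : ∀ k s t, g k s t ≤ 1
  mono : ∀ k t, Monotone fun s => g k s t
  anti : ∀ k s, Antitone fun t => g k s t

lemma Hyp.shift {ν g} (h : Hyp ν g) : Hyp (fun k => ν (k+1)) (fun k => g (k+1)) :=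
  ⟨fun k => h.prob _, fun k => h.meas _, fun k => h.le1 _, fun k => h.mono _, fun k => h.anti _⟩

lemma Dmeas (n : ℕ) : ∀ {ν g}, Hyp ν g → Measurable fun p : ℝ × ℝ => D n ν g p.1 p.2 := by
  induction n with
  | zero => exact fun h => h.meas 0
  | succ n ih =>
    intro ν g h
    have hin := ih h.shift
    haveI := h.prob 0
    have m1 : Measurable fun q : (ℝ × ℝ) × ℝ => g 0 q.1.1 q.2 :=
      (h.meas 0).comp (measurable_fst.fst.prodMk measurable_snd)
    have m2 : Measurable fun q : (ℝ × ℝ) × ℝ =>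
        D n (fun k => ν (k+1)) (fun k => g (k+1)) q.2 q.1.2 :=
      hin.comp (measurable_snd.prodMk measurable_fst.snd)
    exact Measurable.lintegral_prod_right
      (f := fun (p : ℝ × ℝ) (x : ℝ) => g 0 p.1 x * D n (fun k => ν (k+1)) (fun k => g (k+1)) x p.2)
      (m1.mul m2)

lemma Dle1 (n : ℕ) : ∀ {ν g}, Hyp ν g → ∀ s t, D n ν g s t ≤ 1 := by
  induction n with
  | zero => exact fun h s t => h.le1 0 s t
  | succ n ih =>
    intro ν g h s t
    haveI := h.prob 0
    calc ∫⁻ x, g 0 s x * D n _ _ x t ∂(ν 0)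
        ≤ ∫⁻ _, 1 ∂(ν 0) :=
          lintegral_mono fun x => mul_le_one' (h.le1 0 s x) (ih h.shift x t)
      _ = 1 := by simp

lemma Dmono (n : ℕ) : ∀ {ν g}, Hyp ν g → ∀ t, Monotone fun s => D n ν g s t := by
  induction n with
  | zero => exact fun h t => h.mono 0 t
  | succ n ih =>
    intro ν g h t s s' hss
    exact lintegral_mono fun x => mul_le_mul_left (h.mono 0 x hss) _

lemma Danti (n : ℕ) : ∀ {ν g}, Hyp ν g → ∀ s, Antitone fun t => D n ν g s t := by
  induction n with
  | zero => exact fun h s => h.anti 0 s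
  | succ n ih =>
    intro ν g h s t t' htt
    exact lintegral_mono fun x => mul_le_mul_right (ih h.shift x htt) _
noncomputable def pm (m : Measure ℝ) (ν : ℕ → Measure ℝ) : ℕ → Measure ℝ
  | 0 => m
  | (k+1) => ν k

lemma pm_shift (m : Measure ℝ) (ν : ℕ → Measure ℝ) (k : ℕ) :
    pm (ν 0) (fun j => ν (j+1)) k = pm m ν (k+1) := by cases k <;> rfl

lemma CH (n : ℕ) : ∀ {ν g} (m : Measure ℝ), IsProbabilityMeasure m → Hyp ν g → ∀ t,
    ∫⁻ s, D n ν g s t ∂m ≤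
      (∏ k ∈ Finset.range n, ∫⁻ a, ∫⁻ b, g k a b ∂(ν k) ∂(pm m ν k)) *
        ∫⁻ a, g n a t ∂(pm m ν n) := by
  induction n with
  | zero => intro ν g m _ h t; simp [D, pm]
  | succ n ih =>
    intro ν g m hm h t
    haveI := h.prob 0
    have hsh := h.shift
    have hDm : Measurable fun x => D n (fun k => ν (k+1)) (fun k => g (k+1)) x t :=
      (Dmeas n hsh).comp (measurable_id.prodMk measurable_const)
    have hgs : ∀ s, Measurable fun x => g 0 s x := fun s =>
      (h.meas 0).comp (measurable_const.prodMk measurable_id)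
    have step1 : ∀ s, D (n+1) ν g s t ≤
        (∫⁻ x, D n (fun k => ν (k+1)) (fun k => g (k+1)) x t ∂(ν 0)) * ∫⁻ x, g 0 s x ∂(ν 0) := by
      intro s
      have heq : D (n+1) ν g s t
          = ∫⁻ x, (D n (fun k => ν (k+1)) (fun k => g (k+1)) x t) * g 0 s x ∂(ν 0) := by
        show (∫⁻ x, g 0 s x * D n (fun k => ν (k+1)) (fun k => g (k+1)) x t ∂(ν 0)) = _
        simp_rw [mul_comm]
      rw [heq]
      exact cheb_mono_anti (ν 0) hDm (hgs s) (fun x y hxy => Dmono n hsh t hxy) (h.anti 0 s)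
    have hJfin : (∫⁻ x, D n (fun k => ν (k+1)) (fun k => g (k+1)) x t ∂(ν 0)) ≠ ⊤ := by
      refine ne_of_lt (lt_of_le_of_lt ?_ ENNReal.one_lt_top)
      calc ∫⁻ x, D n _ _ x t ∂(ν 0) ≤ ∫⁻ _, 1 ∂(ν 0) := lintegral_mono fun x => Dle1 n hsh x t
        _ = 1 := by simp
    calc ∫⁻ s, D (n+1) ν g s t ∂m
        ≤ ∫⁻ s, (∫⁻ x, D n (fun k => ν (k+1)) (fun k => g (k+1)) x t ∂(ν 0))
            * ∫⁻ x, g 0 s x ∂(ν 0) ∂m := lintegral_mono step1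
      _ = (∫⁻ x, D n (fun k => ν (k+1)) (fun k => g (k+1)) x t ∂(ν 0))
            * ∫⁻ s, ∫⁻ x, g 0 s x ∂(ν 0) ∂m := lintegral_const_mul' _ _ hJfin
      _ ≤ ((∏ k ∈ Finset.range n, ∫⁻ a, ∫⁻ b, (fun k => g (k+1)) k a b ∂((fun k => ν (k+1)) k)
              ∂(pm (ν 0) (fun k => ν (k+1)) k)) *
            ∫⁻ a, (fun k => g (k+1)) n a t ∂(pm (ν 0) (fun k => ν (k+1)) n))
            * ∫⁻ s, ∫⁻ x, g 0 s x ∂(ν 0) ∂m := by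
            gcongr
            exact ih (ν 0) this hsh t
      _ = _ := by
            simp only [pm_shift m ν]
            rw [Finset.prod_range_succ']
            show _ = ((∏ k ∈ Finset.range n, ∫⁻ a, ∫⁻ b, g (k+1) a b ∂(ν (k+1)) ∂(pm m ν (k+1))) *
              (∫⁻ a, ∫⁻ b, g 0 a b ∂(ν 0) ∂(pm m ν 0))) * ∫⁻ a, g (n+1) a t ∂(pm m ν (n+1))
            show (∏ k ∈ Finset.range n, ∫⁻ a, ∫⁻ b, g (k+1) a b ∂(ν (k+1)) ∂(pm m ν (k+1))) *
              (∫⁻ a, g (n+1) a t ∂(pm m ν (n+1))) * (∫⁻ s, ∫⁻ x, g 0 s x ∂(ν 0) ∂(pm m ν 0)) = _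
            ring

lemma intint_le_one {g0 : ℝ → ℝ → ℝ≥0∞} (m1 m2 : Measure ℝ) (h1 : IsProbabilityMeasure m1)
    (h2 : IsProbabilityMeasure m2) (hle : ∀ a b, g0 a b ≤ 1) :
    ∫⁻ a, ∫⁻ b, g0 a b ∂m2 ∂m1 ≤ 1 := by
  calc ∫⁻ a, ∫⁻ b, g0 a b ∂m2 ∂m1 ≤ ∫⁻ _, 1 ∂m1 := by
        refine lintegral_mono fun a => ?_
        calc ∫⁻ b, g0 a b ∂m2 ≤ ∫⁻ _, 1 ∂m2 := lintegral_mono (hle a)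
          _ = 1 := by simp
    _ = 1 := by simp

lemma cycle (n : ℕ) {ν g} (m : Measure ℝ) (hm : IsProbabilityMeasure m) (h : Hyp ν g) :
    ∫⁻ s, D (n+1) ν g s s ∂m ≤
      (∫⁻ a, ∫⁻ b, g 0 a b ∂(ν 0) ∂m) *
      (∏ k ∈ Finset.range n, ∫⁻ a, ∫⁻ b, g (k+1) a b ∂(ν (k+1)) ∂(ν k)) *
      (∫⁻ a, ∫⁻ b, g (n+1) b a ∂(ν n) ∂m) := by
  haveI := h.prob 0
  haveI := h.prob n
  have hsh := h.shift
  set A : ℝ → ℝ≥0∞ := fun s => ∫⁻ x, g 0 s x ∂(ν 0) with hA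
  set B : ℝ → ℝ≥0∞ := fun s => ∫⁻ a, g (n+1) a s ∂(ν n) with hB
  set C : ℝ≥0∞ := ∏ k ∈ Finset.range n, ∫⁻ a, ∫⁻ b, g (k+1) a b ∂(ν (k+1)) ∂(ν k) with hC
  have hCfin : C ≠ ⊤ := by
    refine ne_of_lt (lt_of_le_of_lt (Finset.prod_le_one (fun k _ => zero_le) fun k _ => ?_)
      ENNReal.one_lt_top)
    exact intint_le_one _ _ (h.prob k) (h.prob (k+1)) (fun a b => h.le1 _ a b)
  have step1 : ∀ s, D (n+1) ν g s s ≤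
      (∫⁻ x, D n (fun k => ν (k+1)) (fun k => g (k+1)) x s ∂(ν 0)) * A s := by
    intro s
    have heq : D (n+1) ν g s s
        = ∫⁻ x, (D n (fun k => ν (k+1)) (fun k => g (k+1)) x s) * g 0 s x ∂(ν 0) := by
      show (∫⁻ x, g 0 s x * D n (fun k => ν (k+1)) (fun k => g (k+1)) x s ∂(ν 0)) = _
      simp_rw [mul_comm]
    rw [heq]
    exact cheb_mono_anti (ν 0)
      ((Dmeas n hsh).comp (measurable_id.prodMk measurable_const))
      ((h.meas 0).comp (measurable_const.prodMk measurable_id))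
      (fun x y hxy => Dmono n hsh s hxy) (h.anti 0 s)
  have step2 : ∀ s, (∫⁻ x, D n (fun k => ν (k+1)) (fun k => g (k+1)) x s ∂(ν 0)) ≤ C * B s := by
    intro s
    have := CH n (ν 0) (h.prob 0) hsh s
    simp only [pm_shift m ν] at this
    exact this
  have step3 : ∀ s, D (n+1) ν g s s ≤ C * (A s * B s) := by
    intro s
    calc D (n+1) ν g s s ≤ (∫⁻ x, D n (fun k => ν (k+1)) (fun k => g (k+1)) x s ∂(ν 0)) * A s :=
          step1 s
      _ ≤ (C * B s) * A s := mul_le_mul_left (step2 s) _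
      _ = C * (A s * B s) := by ring
  have hAmeas : Measurable A := Measurable.lintegral_prod_right (h.meas 0)
  have hBmeas : Measurable B :=
    Measurable.lintegral_prod_right (f := fun s a => g (n+1) a s)
      ((h.meas (n+1)).comp (measurable_snd.prodMk measurable_fst))
  have hAmono : Monotone A := fun s s' hss => lintegral_mono fun x => h.mono 0 x hss
  have hBanti : Antitone B := fun s s' hss => lintegral_mono fun a => h.anti (n+1) a hss
  calc ∫⁻ s, D (n+1) ν g s s ∂m ≤ ∫⁻ s, C * (A s * B s) ∂m := lintegral_mono step3
    _ = C * ∫⁻ s, A s * B s ∂m := lintegral_const_mul' _ _ hCfin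
    _ ≤ C * ((∫⁻ s, A s ∂m) * ∫⁻ s, B s ∂m) :=
        mul_le_mul_right (cheb_mono_anti m hAmeas hBmeas hAmono hBanti) _
    _ = (∫⁻ a, ∫⁻ b, g 0 a b ∂(ν 0) ∂m) * C * (∫⁻ a, ∫⁻ b, g (n+1) b a ∂(ν n) ∂m) := by
        ring
-- peel the first coordinate of a pi measure
lemma peel (n : ℕ) (ν : Fin (n+1) → Measure ℝ) [∀ i, SigmaFinite (ν i)]
    {F : (Fin (n+1) → ℝ) → ℝ≥0∞} (hF : Measurable F) :
    ∫⁻ z, F z ∂(Measure.pi ν)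
      = ∫⁻ x, ∫⁻ w, F (Fin.cons x w) ∂(Measure.pi fun j : Fin n => ν j.succ) ∂(ν 0) := by
  have mp := (measurePreserving_piFinSuccAbove ν 0).symm
  rw [← mp.lintegral_comp_emb (MeasurableEquiv.measurableEmbedding _) (f := F)]
  simp_rw [MeasurableEquiv.piFinSuccAbove_symm_apply, Fin.insertNthEquiv,
    Fin.insertNth_zero, Equiv.coe_fn_mk, Fin.zero_succAbove, cast_eq]
  rw [lintegral_prod]
  have hcons : Measurable fun p : ℝ × (Fin n → ℝ) => (Fin.cons p.1 p.2 : Fin (n+1) → ℝ) := by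
    apply measurable_pi_lambda
    intro i
    refine Fin.cases ?_ ?_ i
    · simp only [Fin.cons_zero]; exact measurable_fst
    · intro j; simp only [Fin.cons_succ]; exact (measurable_pi_apply j).comp measurable_snd
  exact (hF.comp hcons).aemeasurable

lemma meas2 {gk : ℝ → ℝ → ℝ≥0∞} (hg : Measurable fun p : ℝ × ℝ => gk p.1 p.2)
    {α : Type*} [MeasurableSpace α] {u v : α → ℝ} (hu : Measurable u) (hv : Measurable v) :
    Measurable fun a => gk (u a) (v a) := hg.comp (hu.prodMk hv)

lemma REPD (n : ℕ) : ∀ {ν : ℕ → Measure ℝ} {g : ℕ → ℝ → ℝ → ℝ≥0∞}, Hyp ν g → ∀ s t,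
    (∫⁻ z, (g 0 s (z 0) * ∏ j : Fin n, g ((j:ℕ)+1) (z j.castSucc) (z j.succ))
        * g (n+1) (z (Fin.last n)) t ∂(Measure.pi fun i : Fin (n+1) => ν (i:ℕ)))
    = D (n+1) ν g s t := by
  induction n with
  | zero =>
    intro ν g h s t
    have hfam : (fun i : Fin 1 => ν (i:ℕ)) = fun _ : Fin 1 => ν 0 := by
      funext i; congr 1; omega
    have hlast : (Fin.last 0) = (0 : Fin 1) := rfl
    simp only [hfam, Finset.univ_eq_empty, Finset.prod_empty, mul_one, hlast]
    have hφ : Measurable fun x : ℝ => g 0 s x * g 1 x t :=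
      (meas2 (h.meas 0) measurable_const measurable_id).mul
        (meas2 (h.meas 1) measurable_id measurable_const)
    have mp := measurePreserving_funUnique (ν 0) (Fin 1)
    have key : ∫⁻ z, g 0 s (z 0) * g 1 (z 0) t ∂(Measure.pi (fun _ : Fin 1 => ν 0))
        = ∫⁻ x, g 0 s x * g 1 x t ∂(ν 0) := by
      rw [← mp.lintegral_comp hφ]
      rfl
    rw [key]
    rfl
  | succ n ih =>
    intro ν g h s t
    haveI : ∀ i : Fin (n+2), SigmaFinite ((fun i : Fin (n+2) => ν (i:ℕ)) i) := fun i => by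
      haveI := h.prob (i:ℕ); exact inferInstance
    have hF : Measurable fun z : Fin (n+2) → ℝ =>
        (g 0 s (z 0) * ∏ j : Fin (n+1), g ((j:ℕ)+1) (z j.castSucc) (z j.succ))
          * g (n+2) (z (Fin.last (n+1))) t := by
      refine Measurable.mul (Measurable.mul ?_ ?_) ?_
      · exact meas2 (h.meas 0) measurable_const (measurable_pi_apply 0)
      · exact Finset.measurable_prod _ fun j _ =>
          meas2 (h.meas _) (measurable_pi_apply _) (measurable_pi_apply _)
      · exact meas2 (h.meas _) (measurable_pi_apply _) measurable_const
    rw [peel (n+1) (fun i : Fin (n+2) => ν (i:ℕ)) hF]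
    have hgfin : ∀ s x, g 0 s x ≠ ⊤ := fun s x =>
      ne_of_lt (lt_of_le_of_lt (h.le1 0 s x) ENNReal.one_lt_top)
    have inner_eq : ∀ x : ℝ,
        (∫⁻ w, (g 0 s ((Fin.cons x w : Fin (n+2) → ℝ) 0) *
            ∏ j : Fin (n+1), g ((j:ℕ)+1) ((Fin.cons x w : Fin (n+2) → ℝ) j.castSucc)
              ((Fin.cons x w : Fin (n+2) → ℝ) j.succ))
            * g (n+2) ((Fin.cons x w : Fin (n+2) → ℝ) (Fin.last (n+1))) t
          ∂(Measure.pi fun j : Fin (n+1) => ν ((j.succ : Fin (n+2)) : ℕ)))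
        = g 0 s x * D (n+1) (fun k => ν (k+1)) (fun k => g (k+1)) x t := by
      intro x
      have hfam2 : (fun j : Fin (n+1) => ν ((j.succ : Fin (n+2)) : ℕ))
          = fun j : Fin (n+1) => ν ((j:ℕ)+1) := by
        funext j; simp [Fin.val_succ]
      rw [hfam2]
      have integrand_eq : ∀ w : Fin (n+1) → ℝ,
          (g 0 s ((Fin.cons x w : Fin (n+2) → ℝ) 0) *
            ∏ j : Fin (n+1), g ((j:ℕ)+1) ((Fin.cons x w : Fin (n+2) → ℝ) j.castSucc)
              ((Fin.cons x w : Fin (n+2) → ℝ) j.succ))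
            * g (n+2) ((Fin.cons x w : Fin (n+2) → ℝ) (Fin.last (n+1))) t
          = g 0 s x * (((fun k => g (k+1)) 0 x (w 0) *
              ∏ j : Fin n, (fun k => g (k+1)) ((j:ℕ)+1) (w j.castSucc) (w j.succ))
              * (fun k => g (k+1)) (n+1) (w (Fin.last n)) t) := by
        intro w
        have hprod : (∏ j : Fin (n+1), g ((j:ℕ)+1) ((Fin.cons x w : Fin (n+2) → ℝ) j.castSucc)
              ((Fin.cons x w : Fin (n+2) → ℝ) j.succ))
            = g 1 x (w 0) * ∏ j : Fin n, g ((j:ℕ)+1+1) (w j.castSucc) (w j.succ) := by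
          rw [Fin.prod_univ_succ]
          simp only [Fin.castSucc_zero, Fin.cons_zero, Fin.cons_succ, Fin.val_zero, zero_add,
            Fin.val_succ, ← Fin.succ_castSucc]
        have hlast2 : (Fin.cons x w : Fin (n+2) → ℝ) (Fin.last (n+1)) = w (Fin.last n) := by
          rw [← Fin.succ_last, Fin.cons_succ]
        rw [hprod, hlast2]
        simp only [Fin.cons_zero]
        ring
      simp_rw [integrand_eq]
      rw [lintegral_const_mul' _ _ (hgfin s x), ih h.shift x t]
    simp_rw [inner_eq]
    rfl

open Fin.NatCast in
lemma REP (n : ℕ) (ν : Fin (n+2) → Measure ℝ) (G : Fin (n+2) → ℝ → ℝ → ℝ≥0∞)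
    (h : Hyp (fun k => ν (k : Fin (n+2))) (fun k => G (k : Fin (n+2)))) :
    ∫⁻ x, ∏ i, G i (x i) (x (i+1)) ∂(Measure.pi ν)
      = ∫⁻ s, D (n+1) (fun k => ν ((k+1 : ℕ) : Fin (n+2)))
          (fun k => G (k : Fin (n+2))) s s ∂(ν 0) := by
  have hGmeas : ∀ i : Fin (n+2), Measurable fun p : ℝ × ℝ => G i p.1 p.2 := by
    intro i
    have := h.meas (i:ℕ)
    rwa [Fin.cast_val_eq_self] at this
  haveI : ∀ i : Fin (n+2), SigmaFinite (ν i) := by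
    intro i
    have := h.prob (i:ℕ)
    rw [Fin.cast_val_eq_self] at this
    exact inferInstance
  have hF : Measurable fun x : Fin (n+2) → ℝ => ∏ i, G i (x i) (x (i+1)) :=
    Finset.measurable_prod _ fun i _ =>
      meas2 (hGmeas i) (measurable_pi_apply _) (measurable_pi_apply _)
  rw [peel (n+1) ν hF]
  have hHyp2 : Hyp (fun k => ν ((k+1 : ℕ) : Fin (n+2))) (fun k => G (k : Fin (n+2))) :=
    ⟨fun k => h.prob (k+1), fun k => h.meas k, fun k => h.le1 k,
      fun k => h.mono k, fun k => h.anti k⟩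
  have hfam : (fun j : Fin (n+1) => ν j.succ)
      = fun i : Fin (n+1) => (fun k => ν ((k+1 : ℕ) : Fin (n+2))) (i:ℕ) := by
    funext j
    congr 1
    apply Fin.ext
    rw [Fin.val_succ, Fin.val_natCast]
    refine (Nat.mod_eq_of_lt ?_).symm
    have := j.isLt
    omega
  have inner_eq : ∀ x : ℝ,
      (∫⁻ w, ∏ i, G i ((Fin.cons x w : Fin (n+2) → ℝ) i) ((Fin.cons x w : Fin (n+2) → ℝ) (i+1))
        ∂(Measure.pi fun j : Fin (n+1) => ν j.succ))
      = D (n+1) (fun k => ν ((k+1 : ℕ) : Fin (n+2))) (fun k => G (k : Fin (n+2))) x x := by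
    intro x
    rw [hfam, ← REPD n hHyp2 x x]
    apply lintegral_congr
    intro w
    have e1 : ((0 : Fin (n+2)) + 1) = (0 : Fin (n+1)).succ := by
      apply Fin.ext; rw [Fin.val_add, Fin.val_zero, Fin.val_one, Fin.val_succ, Fin.val_zero]
      exact Nat.mod_eq_of_lt (by omega)
    have e2 : ∀ j : Fin (n+1), (Fin.cons x w : Fin (n+2) → ℝ) j.succ = w j :=
      fun j => Fin.cons_succ (α := fun _ : Fin (n+2) => ℝ) x w j
    have e3 : ∀ j : Fin n, (j.castSucc.succ : Fin (n+2)) + 1 = (j.succ : Fin (n+1)).succ := by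
      intro j
      apply Fin.ext
      have hj := j.isLt
      simp only [Fin.val_add, Fin.val_succ, Fin.coe_castSucc, Fin.val_one]
      exact Nat.mod_eq_of_lt (by omega)
    have t1 : (Fin.cons x w : Fin (n+2) → ℝ) ((0 : Fin (n+2)) + 1) = w 0 := by
      rw [e1]; exact e2 0
    have l2 : ∀ j : Fin n, (Fin.cons x w : Fin (n+2) → ℝ) (j.castSucc.succ + 1) = w j.succ := by
      intro j; rw [e3]; exact e2 _
    have l3 : (Fin.cons x w : Fin (n+2) → ℝ) ((Fin.last n).succ + 1) = x := by
      have e4 : ((Fin.last n).succ : Fin (n+2)) + 1 = 0 := by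
        apply Fin.ext
        rw [Fin.val_add, Fin.val_succ, Fin.val_last, Fin.val_one, Fin.val_zero]
        simp
      rw [e4]; exact Fin.cons_zero (α := fun _ : Fin (n+2) => ℝ) x w
    have e5 : ∀ j : Fin n, G (j.castSucc.succ) = G ((((j:ℕ)+1 : ℕ)) : Fin (n+2)) := by
      intro j
      refine congrArg G (Fin.ext ?_)
      have hj := j.isLt
      simp only [Fin.val_succ, Fin.coe_castSucc, Fin.val_natCast]
      refine (Nat.mod_eq_of_lt ?_).symm
      omega
    have e6 : G ((Fin.last n).succ) = G (((n+1 : ℕ)) : Fin (n+2)) := by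
      refine congrArg G (Fin.ext ?_)
      simp only [Fin.val_succ, Fin.val_last, Fin.val_natCast]
      refine (Nat.mod_eq_of_lt ?_).symm
      omega
    have e7 : G 0 = G (((0 : ℕ)) : Fin (n+2)) := by
      refine congrArg G (Fin.ext ?_)
      simp
    rw [Fin.prod_univ_succ, Fin.prod_univ_castSucc]
    simp only [Fin.cons_zero, t1, l2, l3, e2]
    rw [e6, e7]
    simp only [fun j : Fin n => e5 j]
    ring
  simp_rw [inner_eq]

lemma sandwich (μ₂ : Measure ℝ) [IsFiniteMeasure μ₂] (S : Set (ℝ × ℝ))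
    (hS : ∀ p q : ℝ × ℝ, p.1 ≤ q.1 → p.2 ≤ q.2 → p ∈ S → q ∈ S) :
    ∃ M N : Set (ℝ × ℝ), MeasurableSet M ∧ MeasurableSet N ∧ M ⊆ S ∧ S ⊆ M ∪ N ∧
      (∀ p q : ℝ × ℝ, p.1 ≤ q.1 → p.2 ≤ q.2 → p ∈ M → q ∈ M) ∧
      (∀ μ₁ : Measure ℝ, SFinite μ₁ → (μ₁.prod μ₂) N = 0) := by
  classical
  set b : ℝ → EReal := fun x => sInf ((fun z : ℝ => (z : EReal)) '' {z | (x, z) ∈ S}) with hb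
  have hban : Antitone b := by
    intro x x' hxx
    refine sInf_le_sInf (Set.image_mono ?_)
    intro z hz
    exact hS (x, z) (x', z) hxx le_rfl hz
  have hbmeas : Measurable b := hban.measurable
  have hble : ∀ p : ℝ × ℝ, p ∈ S → b p.1 ≤ (p.2 : EReal) := by
    intro p hp
    exact sInf_le ⟨p.2, hp, rfl⟩
  set A2 : Set ℝ := {c | 0 < μ₂ {c}} with hA2
  have hA2count : A2.Countable := by
    have := Measure.countable_meas_level_set_pos (μ := μ₂) (g := id) measurable_id
    simpa using this
  set U1 : Set (ℝ × ℝ) := {p | b p.1 < (p.2 : EReal)} with hU1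
  set M : Set (ℝ × ℝ) := U1 ∪ ⋃ c ∈ A2, ({x | (x, c) ∈ S} ×ˢ ({c} : Set ℝ)) with hM
  set N : Set (ℝ × ℝ) := {p | b p.1 = (p.2 : EReal) ∧ μ₂ {p.2} = 0} with hN
  have hU1meas : MeasurableSet U1 :=
    measurableSet_lt (hbmeas.comp measurable_fst) (measurable_coe_real_ereal.comp measurable_snd)
  have hrowmeas : ∀ c : ℝ, MeasurableSet ({x | (x, c) ∈ S} ×ˢ ({c} : Set ℝ)) := by
    intro c
    refine MeasurableSet.prod ?_ (measurableSet_singleton c)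
    have : Set.OrdConnected {x | (x, c) ∈ S} :=
      ⟨fun x hx y _ z hz => hS (x, c) (z, c) hz.1 le_rfl hx⟩
    exact this.measurableSet
  have hMmeas : MeasurableSet M :=
    hU1meas.union (MeasurableSet.biUnion hA2count fun c _ => hrowmeas c)
  have hNmeas : MeasurableSet N := by
    have h1 : MeasurableSet {p : ℝ × ℝ | b p.1 = (p.2 : EReal)} := by
      have hle1 := measurableSet_le (hbmeas.comp measurable_fst)
        (measurable_coe_real_ereal.comp measurable_snd)
      have hle2 := measurableSet_le (measurable_coe_real_ereal.comp measurable_snd)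
        (hbmeas.comp measurable_fst)
      have : {p : ℝ × ℝ | b p.1 = (p.2 : EReal)}
          = {p : ℝ × ℝ | b p.1 ≤ (p.2 : EReal)} ∩ {p : ℝ × ℝ | (p.2 : EReal) ≤ b p.1} := by
        ext p; simp [le_antisymm_iff]
      rw [this]
      exact hle1.inter hle2
    have h2 : MeasurableSet {p : ℝ × ℝ | μ₂ {p.2} = 0} := by
      have : {p : ℝ × ℝ | μ₂ {p.2} = 0} = Prod.snd ⁻¹' A2ᶜ := by
        ext p; simp [hA2, pos_iff_ne_zero]
      rw [this]
      exact measurable_snd hA2count.measurableSet.compl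
    exact h1.inter h2
  have hMS : M ⊆ S := by
    intro p hp
    rcases hp with hp | hp
    · have hp' : sInf ((fun z : ℝ => (z : EReal)) '' {z | (p.1, z) ∈ S}) < (p.2 : EReal) := hp
      obtain ⟨e, he, helt⟩ := sInf_lt_iff.mp hp'
      obtain ⟨z, hz, rfl⟩ := he
      have : z < p.2 := EReal.coe_lt_coe_iff.mp helt
      have := hS (p.1, z) (p.1, p.2) le_rfl this.le hz
      simpa using this
    · simp only [Set.mem_iUnion] at hp
      obtain ⟨c, _, hx, hc⟩ := hp
      have : (p.1, c) ∈ S := hx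
      have h2 : (c : ℝ) = p.2 := by simpa using hc.symm
      rw [h2] at this
      simpa using this
  have hMup : ∀ p q : ℝ × ℝ, p.1 ≤ q.1 → p.2 ≤ q.2 → p ∈ M → q ∈ M := by
    intro p q h1 h2 hp
    rcases hp with hp | hp
    · left
      calc b q.1 ≤ b p.1 := hban h1
        _ < (p.2 : EReal) := hp
        _ ≤ (q.2 : EReal) := EReal.coe_le_coe_iff.mpr h2
    · simp only [Set.mem_iUnion] at hp
      obtain ⟨c, hcA2, hx, hc⟩ := hp
      have hpc : p.2 = c := by simpa using hc
      have hpS : (p.1, p.2) ∈ S := by rw [hpc]; exact hx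
      rcases eq_or_lt_of_le h2 with heq | hlt
      · right
        simp only [Set.mem_iUnion]
        refine ⟨c, hcA2, ?_, ?_⟩
        · exact hS (p.1, c) (q.1, c) h1 le_rfl hx
        · simp [← heq, hpc]
      · left
        calc b q.1 ≤ b p.1 := hban h1
          _ ≤ (p.2 : EReal) := hble _ hpS
          _ < (q.2 : EReal) := EReal.coe_lt_coe_iff.mpr hlt
  have hSMN : S ⊆ M ∪ N := by
    intro p hp
    by_cases hpM : p ∈ M
    · exact Or.inl hpM
    right
    have hnl : ¬ (b p.1 < (p.2 : EReal)) := fun h => hpM (Or.inl h)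
    have heq : b p.1 = (p.2 : EReal) := le_antisymm (hble p hp) (not_lt.mp hnl)
    refine ⟨heq, ?_⟩
    by_contra hne
    have hpA2 : p.2 ∈ A2 := by simp [hA2, pos_iff_ne_zero, hne]
    apply hpM
    right
    simp only [Set.mem_iUnion]
    exact ⟨p.2, hpA2, by simpa using hp, rfl⟩
  refine ⟨M, N, hMmeas, hNmeas, hMS, hSMN, hMup, ?_⟩
  intro μ₁ hsf
  rw [Measure.prod_apply hNmeas]
  have hsec : ∀ x : ℝ, μ₂ (Prod.mk x ⁻¹' N) = 0 := by
    intro x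
    rcases Set.eq_empty_or_nonempty (Prod.mk x ⁻¹' N) with he | ⟨z₀, hz₀⟩
    · simp [he]
    · have hz₀' : b x = (z₀ : EReal) ∧ μ₂ {z₀} = 0 := hz₀
      refine measure_mono_null ?_ hz₀'.2
      intro z hz
      have hz' : b x = (z : EReal) ∧ μ₂ {z} = 0 := hz
      have : (z : EReal) = (z₀ : EReal) := hz'.1 ▸ hz₀'.1
      simpa using EReal.coe_eq_coe_iff.mp this
  simp [hsec]

open Fin.NatCast in
lemma main2 {Ω : Type*} [MeasurableSpace Ω] (μ : Measure Ω) [IsProbabilityMeasure μ]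
    (n : ℕ) (X : Fin (n+2) → Ω → ℝ) (hmeas : ∀ i, Measurable (X i))
    (hindep : ProbabilityTheory.iIndepFun (m := fun _ => Real.measurableSpace) X μ)
    (f : Fin (n+2) → ℝ → ℝ → ℝ)
    (hmono1 : ∀ i y, Monotone fun x => f i x y)
    (hmono2 : ∀ i x, Monotone fun y => f i x y)
    (y : Fin (n+2) → ℝ) :
    μ (⋂ i, (fun ω => (X i ω, -X (i+1) ω)) ⁻¹' {p : ℝ × ℝ | y i < f i p.1 p.2})
      ≤ ∏ i, μ ((fun ω => (X i ω, -X (i+1) ω)) ⁻¹' {p : ℝ × ℝ | y i < f i p.1 p.2}) := by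
  classical
  set ν : Fin (n+2) → Measure ℝ := fun i => μ.map (X i) with hν
  have hνprob : ∀ i, IsProbabilityMeasure (ν i) := fun i =>
    Measure.isProbabilityMeasure_map (hmeas i).aemeasurable
  set ν2 : Fin (n+2) → Measure ℝ := fun i => (ν (i+1)).map (fun z : ℝ => -z) with hν2
  have hν2prob : ∀ i, IsProbabilityMeasure (ν2 i) := fun i => by
    haveI := hνprob (i+1)
    exact Measure.isProbabilityMeasure_map measurable_neg.aemeasurable
  set S : Fin (n+2) → Set (ℝ × ℝ) := fun i => {p | y i < f i p.1 p.2} with hSdef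
  have hSup : ∀ i, ∀ p q : ℝ × ℝ, p.1 ≤ q.1 → p.2 ≤ q.2 → p ∈ S i → q ∈ S i := by
    intro i p q h1 h2 hp
    exact lt_of_lt_of_le hp (le_trans (hmono1 i p.2 h1) (hmono2 i q.1 h2))
  have hsand := fun i => by
    haveI := hν2prob i
    exact sandwich (ν2 i) (S i) (hSup i)
  choose M N hMmeas hNmeas hMS hSMN hMup hNnull using hsand
  have hpairmeas : ∀ i : Fin (n+2), Measurable fun ω => (X i ω, -X (i+1) ω) :=
    fun i => (hmeas i).prodMk (hmeas (i+1)).neg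
  have hne : ∀ i : Fin (n+2), i ≠ i + 1 := by
    intro i h
    have h2 := congrArg Fin.val h
    rw [Fin.val_add, Fin.val_one] at h2
    have hi := i.isLt
    rcases Nat.lt_or_ge (i.val + 1) (n+2) with hc | hc
    · rw [Nat.mod_eq_of_lt hc] at h2; omega
    · have hin : i.val + 1 = n + 2 := by omega
      rw [hin, Nat.mod_self] at h2; omega
  have hlaw : ∀ i : Fin (n+2), μ.map (fun ω => (X i ω, -X (i+1) ω)) = (ν i).prod (ν2 i) := by
    intro i
    have hI : ProbabilityTheory.IndepFun (X i) (X (i+1)) μ := hindep.indepFun (hne i)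
    have hI2 : ProbabilityTheory.IndepFun (X i) (fun ω => -X (i+1) ω) μ :=
      hI.comp measurable_id measurable_neg
    have hmp : μ.map (fun ω => (X i ω, -X (i+1) ω)) = _ := (ProbabilityTheory.indepFun_iff_map_prod_eq_prod_map_map
      (hmeas i).aemeasurable ((hmeas (i+1)).neg.aemeasurable)).mp hI2
    rw [hmp]
    congr 1
    simp only [hν2, hν]
    rw [Measure.map_map measurable_neg (hmeas (i+1))]
    rfl
  set Gset : Fin (n+2) → Set Ω := fun i => (fun ω => (X i ω, -X (i+1) ω)) ⁻¹' M i with hGdef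
  have hGmeas : ∀ i, MeasurableSet (Gset i) := fun i => (hpairmeas i) (hMmeas i)
  have hμG : ∀ i, μ (Gset i) = ((ν i).prod (ν2 i)) (M i) := by
    intro i; rw [← hlaw i, Measure.map_apply (hpairmeas i) (hMmeas i)]
  have hμZ : ∀ i, μ ((fun ω => (X i ω, -X (i+1) ω)) ⁻¹' N i) = 0 := by
    intro i
    rw [← Measure.map_apply (hpairmeas i) (hNmeas i), hlaw i]
    exact hNnull i (ν i) inferInstance
  have hLHS : μ (⋂ i, (fun ω => (X i ω, -X (i+1) ω)) ⁻¹' S i) ≤ μ (⋂ i, Gset i) := by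
    have hsub : (⋂ i, (fun ω => (X i ω, -X (i+1) ω)) ⁻¹' S i)
        ⊆ (⋂ i, Gset i) ∪ (⋃ i, (fun ω => (X i ω, -X (i+1) ω)) ⁻¹' N i) := by
      intro ω hω
      by_cases hall : ∀ i, ω ∈ Gset i
      · exact Or.inl (Set.mem_iInter.mpr hall)
      · push_neg at hall
        obtain ⟨i, hi⟩ := hall
        refine Or.inr (Set.mem_iUnion.mpr ⟨i, ?_⟩)
        have hωS : (X i ω, -X (i+1) ω) ∈ S i := Set.mem_iInter.mp hω i
        rcases hSMN i hωS with h | h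
        · exact absurd h hi
        · exact h
    calc μ (⋂ i, (fun ω => (X i ω, -X (i+1) ω)) ⁻¹' S i)
        ≤ μ ((⋂ i, Gset i) ∪ (⋃ i, (fun ω => (X i ω, -X (i+1) ω)) ⁻¹' N i)) :=
          measure_mono hsub
      _ ≤ μ (⋂ i, Gset i) + μ (⋃ i, (fun ω => (X i ω, -X (i+1) ω)) ⁻¹' N i) :=
          measure_union_le _ _
      _ = μ (⋂ i, Gset i) := by rw [measure_iUnion_null fun i => hμZ i, add_zero]
  have hRHS : ∀ i, μ (Gset i) ≤ μ ((fun ω => (X i ω, -X (i+1) ω)) ⁻¹' S i) :=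
    fun i => measure_mono (Set.preimage_mono (hMS i))
  -- the indicator kernels
  set gg : Fin (n+2) → ℝ → ℝ → ℝ≥0∞ :=
    fun i a b => (M i).indicator (fun _ => 1) (a, -b) with hgg
  have hggmeas : ∀ i, Measurable fun p : ℝ × ℝ => gg i p.1 p.2 := by
    intro i
    exact ((measurable_const.indicator (hMmeas i)).comp
      (measurable_fst.prodMk measurable_snd.neg))
  have hggle1 : ∀ i (a b : ℝ), gg i a b ≤ 1 := by
    intro i a b
    by_cases h : (a, -b) ∈ M i <;> simp [hgg, h]
  have hggmono : ∀ i (b : ℝ), Monotone fun a => gg i a b := by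
    intro i b a a' haa
    by_cases h : (a, -b) ∈ M i
    · have h2 : (a', -b) ∈ M i := hMup i (a, -b) (a', -b) haa le_rfl h
      simp [hgg, h, h2]
    · simp only [hgg, Set.indicator_of_notMem h]
      exact zero_le
  have hgganti : ∀ i (a : ℝ), Antitone fun b => gg i a b := by
    intro i a b b' hbb
    by_cases h : (a, -b') ∈ M i
    · have h2 : (a, -b) ∈ M i := hMup i (a, -b') (a, -b) le_rfl (neg_le_neg hbb) h
      simp [hgg, h, h2]
    · simp only [hgg, Set.indicator_of_notMem h]
      exact zero_le
  have hyp1 : Hyp (fun k => ν (k : Fin (n+2))) (fun k => gg (k : Fin (n+2))) :=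
    ⟨fun k => hνprob _, fun k => hggmeas _, fun k => hggle1 _,
      fun k => hggmono _, fun k => hgganti _⟩
  have hyp2 : Hyp (fun k => ν ((k+1 : ℕ) : Fin (n+2))) (fun k => gg (k : Fin (n+2))) :=
    ⟨fun k => hνprob _, fun k => hggmeas _, fun k => hggle1 _,
      fun k => hggmono _, fun k => hgganti _⟩
  -- q-values
  have hq : ∀ i : Fin (n+2), (∫⁻ a, ∫⁻ b, gg i a b ∂(ν (i+1)) ∂(ν i)) = μ (Gset i) := by
    intro i
    haveI := hνprob (i+1)
    rw [hμG i, Measure.prod_apply (hMmeas i)]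
    refine lintegral_congr fun a => ?_
    have hsecmeas : Measurable fun z : ℝ => (M i).indicator (fun _ => (1:ℝ≥0∞)) (a, z) :=
      (measurable_const.indicator (hMmeas i)).comp measurable_prodMk_left
    have h1 : ∫⁻ b, gg i a b ∂(ν (i+1)) = ∫⁻ z, (M i).indicator (fun _ => 1) (a, z) ∂(ν2 i) := by
      rw [hν2]
      rw [lintegral_map hsecmeas measurable_neg]
    rw [h1]
    have h2 : ∀ z : ℝ, (M i).indicator (fun _ => (1:ℝ≥0∞)) (a, z)
        = (Prod.mk a ⁻¹' M i).indicator (fun _ => 1) z := by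
      intro z
      by_cases h : (a, z) ∈ M i <;> simp [Set.indicator, h]
    simp_rw [h2]
    exact lintegral_indicator_one (measurable_prodMk_left (hMmeas i))
  -- core inequality
  have hcore : μ (⋂ i, Gset i) ≤ ∏ i, μ (Gset i) := by
    haveI : ∀ i, SigmaFinite (ν i) := fun i => by haveI := hνprob i; exact inferInstance
    have hXvec : Measurable fun ω => fun i => X i ω := measurable_pi_lambda _ hmeas
    have hpi : μ.map (fun ω i => X i ω) = Measure.pi ν := by
      refine (Measure.pi_eq fun B hB => ?_).symm
      rw [Measure.map_apply hXvec (MeasurableSet.univ_pi hB)]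
      have hpre : (fun ω i => X i ω) ⁻¹' (Set.univ.pi B) = ⋂ i, X i ⁻¹' B i := by
        ext ω; simp [Set.mem_univ_pi]
      rw [hpre]
      have hmul := (ProbabilityTheory.iIndepFun_iff_measure_inter_preimage_eq_mul.mp hindep)
        Finset.univ (fun i _ => hB i)
      have hbig : (⋂ i ∈ Finset.univ, X i ⁻¹' B i) = ⋂ i, X i ⁻¹' B i := by
        ext ω; simp
      rw [hbig] at hmul
      rw [hmul]
      exact Finset.prod_congr rfl fun i _ => (Measure.map_apply (hmeas i) (hB i)).symm
    set Spi : Set (Fin (n+2) → ℝ) := {x | ∀ i, (x i, -x (i+1)) ∈ M i} with hSpidef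
    have hSpimeas : MeasurableSet Spi := by
      have : Spi = ⋂ i, (fun x : Fin (n+2) → ℝ => (x i, -x (i+1))) ⁻¹' M i := by
        ext x; simp [hSpidef]
      rw [this]
      exact MeasurableSet.iInter fun i =>
        ((measurable_pi_apply i).prodMk (measurable_pi_apply (i+1)).neg) (hMmeas i)
    have hinter : (⋂ i, Gset i) = (fun ω i => X i ω) ⁻¹' Spi := by
      ext ω; simp [hGdef, hSpidef]
    have hind : ∀ x : Fin (n+2) → ℝ,
        Spi.indicator (1 : (Fin (n+2) → ℝ) → ℝ≥0∞) x = ∏ i, gg i (x i) (x (i+1)) := by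
      intro x
      by_cases hx : x ∈ Spi
      · rw [Set.indicator_of_mem hx]
        refine (Finset.prod_eq_one fun i _ => ?_).symm
        have : (x i, -x (i+1)) ∈ M i := hx i
        simp [hgg, this]
      · rw [Set.indicator_of_notMem hx]
        have : ∃ i, (x i, -x (i+1)) ∉ M i := by
          by_contra hc
          push_neg at hc
          exact hx hc
        obtain ⟨i, hi⟩ := this
        refine (Finset.prod_eq_zero (Finset.mem_univ i) ?_).symm
        simp [hgg, hi]
    have hval : μ (⋂ i, Gset i) = ∫⁻ x, ∏ i, gg i (x i) (x (i+1)) ∂(Measure.pi ν) :=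
      calc μ (⋂ i, Gset i) = (μ.map (fun ω i => X i ω)) Spi := by
            rw [hinter, Measure.map_apply hXvec hSpimeas]
        _ = (Measure.pi ν) Spi := by rw [hpi]
        _ = ∫⁻ x, Spi.indicator 1 x ∂(Measure.pi ν) := (lintegral_indicator_one hSpimeas).symm
        _ = ∫⁻ x, ∏ i, gg i (x i) (x (i+1)) ∂(Measure.pi ν) := lintegral_congr hind
    rw [hval, REP n ν gg hyp1]
    refine le_trans (cycle n (ν 0) (hνprob 0) hyp2) ?_
    -- now identify the three factors
    have ccast : ∀ k : ℕ, ((k+1 : ℕ) : Fin (n+2)) = ((k : ℕ) : Fin (n+2)) + 1 := by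
      intro k; push_cast; ring
    have c0 : ((0 : ℕ) : Fin (n+2)) = 0 := by simp
    have hE0 : (∫⁻ a, ∫⁻ b, gg ((0:ℕ) : Fin (n+2)) a b ∂(ν ((0+1 : ℕ) : Fin (n+2))) ∂(ν 0))
        = μ (Gset 0) := by
      rw [ccast 0, c0]
      have := hq 0
      simpa using this
    have hmid : ∀ k : ℕ, (∫⁻ a, ∫⁻ b, gg ((k+1 : ℕ) : Fin (n+2)) a b
          ∂(ν ((k+1+1 : ℕ) : Fin (n+2))) ∂(ν ((k+1 : ℕ) : Fin (n+2))))
        = μ (Gset ((k+1 : ℕ) : Fin (n+2))) := by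
      intro k
      rw [ccast (k+1)]
      exact hq _
    have hlastc : ((n+1 : ℕ) : Fin (n+2)) + 1 = 0 := by
      rw [← ccast (n+1)]
      exact Fin.natCast_self (n+2)
    have hElast : (∫⁻ a, ∫⁻ b, gg ((n+1 : ℕ) : Fin (n+2)) b a
          ∂(ν ((n+1 : ℕ) : Fin (n+2))) ∂(ν 0))
        = μ (Gset ((n+1 : ℕ) : Fin (n+2))) := by
      haveI := hνprob 0
      haveI := hνprob ((n+1 : ℕ) : Fin (n+2))
      have hmsw : Measurable (Function.uncurry fun a b : ℝ => gg ((n+1 : ℕ) : Fin (n+2)) b a) := by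
        have := (hggmeas ((n+1 : ℕ) : Fin (n+2))).comp
          ((measurable_snd (α := ℝ) (β := ℝ)).prodMk measurable_fst)
        exact this
      have hsw := lintegral_lintegral_swap (μ := ν 0) (ν := ν ((n+1 : ℕ) : Fin (n+2)))
        (f := fun a b => gg ((n+1 : ℕ) : Fin (n+2)) b a) hmsw.aemeasurable
      rw [hsw]
      have hq2 := hq ((n+1 : ℕ) : Fin (n+2))
      rw [hlastc] at hq2
      exact hq2
    rw [hE0, hElast, Finset.prod_congr rfl (fun k _ => hmid k)]
    refine le_of_eq ?_
    have hreindex : ∏ i : Fin (n+2), μ (Gset i)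
        = ∏ k ∈ Finset.range (n+2), μ (Gset ((k : ℕ) : Fin (n+2))) := by
      rw [← Fin.prod_univ_eq_prod_range (fun k => μ (Gset ((k : ℕ) : Fin (n+2)))) (n+2)]
      exact Finset.prod_congr rfl fun i _ => by rw [Fin.cast_val_eq_self]
    rw [hreindex, Finset.prod_range_succ, Finset.prod_range_succ', c0]
    ring
  calc μ (⋂ i, (fun ω => (X i ω, -X (i+1) ω)) ⁻¹' S i) ≤ μ (⋂ i, Gset i) := hLHS
    _ ≤ ∏ i, μ (Gset i) := hcore
    _ ≤ ∏ i, μ ((fun ω => (X i ω, -X (i+1) ω)) ⁻¹' S i) :=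
        Finset.prod_le_prod' fun i _ => hRHS i

end CyclicNUOD

open CyclicNUOD in
/-- For independent `X₁,…,X_K` (with `X_{K+1} = X₁`) and component-wise increasing
`fᵢ : ℝ² → ℝ`, the vector `Yᵢ = fᵢ(Xᵢ, −X_{i+1})` is negatively upper orthant dependent. -/
theorem cyclic_nuod {Ω : Type*} [MeasurableSpace Ω] (μ : Measure Ω)
    [IsProbabilityMeasure μ] (K : ℕ) [NeZero K] (X : Fin K → Ω → ℝ)
    (hmeas : ∀ i, Measurable (X i))
    (hindep : ProbabilityTheory.iIndepFun (m := fun _ => Real.measurableSpace) X μ)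
    (f : Fin K → ℝ → ℝ → ℝ)
    (hmono1 : ∀ i y, Monotone fun x => f i x y)
    (hmono2 : ∀ i x, Monotone fun y => f i x y)
    (Y : Fin K → Ω → ℝ) (hY : ∀ i ω, Y i ω = f i (X i ω) (-X (i + 1) ω)) :
    ∀ y : Fin K → ℝ,
      μ (⋂ i, {ω | y i < Y i ω}) ≤ ∏ i, μ {ω | y i < Y i ω} := by
  intro y
  have hA : ∀ i, {ω | y i < Y i ω}
      = (fun ω => (X i ω, -X (i+1) ω)) ⁻¹' {p : ℝ × ℝ | y i < f i p.1 p.2} := by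
    intro i; ext ω; simp [hY i ω]
  simp_rw [hA]
  obtain ⟨m, rfl⟩ : ∃ m, K = m + 1 :=
    ⟨K - 1, (Nat.succ_pred_eq_of_pos (Nat.pos_of_ne_zero (NeZero.ne K))).symm⟩
  cases m with
  | zero =>
    have h0 : (⋂ i : Fin 1, (fun ω => (X i ω, -X (i+1) ω)) ⁻¹' {p : ℝ × ℝ | y i < f i p.1 p.2})
        = (fun ω => (X 0 ω, -X (0+1) ω)) ⁻¹' {p : ℝ × ℝ | y 0 < f 0 p.1 p.2} := by
      apply le_antisymm (Set.iInter_subset _ 0)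
      refine Set.subset_iInter fun i => ?_
      rw [Subsingleton.elim i 0]
    rw [h0, Fin.prod_univ_one]
  | succ m =>
    exact main2 μ m X hmeas hindep f hmono1 hmono2 y
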